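/- Let C ⊆ F_q^n be a k-dimensional F_q-linear code (1 ≤ k < n), let K be a finite field of characteristic p with q^k elements, let κ : K → Hom_{F_p}(C,F_p) be an F_p-linear isomorphism, write f_λ = κ(λ), and let D ⊆ K^m be an s-dimensional K-linear code (1 ≤ s < m) such that for every 1 ≤ i ≤ m there exists Λ ∈ D whose i-th coordinate equals 1. Let S̄ = {(c_1,…,c_m | d_1,…,d_m) : (c_1,…,c_m) ∈ ⋂_{Λ∈D} ker(F_Λ), d_i ∈ C^⊥} ⊆ F_q^{2nm}. Then min{swt(w) : w ∈ S̄^{⊥s} ∖ S̄} = min{d(C), ℓ}, where ℓ = min{wt(X) : X ∈ D^Θ ∖ (C^⊥)^m}. -/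

import Mathlib

open Matrix

attribute [local instance] Classical.propDecidable

section Helpers

lemma factor_through_dual {kk V W : Type} [Field kk] [AddCommGroup V] [Module kk V]
    [AddCommGroup W] [Module kk W] [FiniteDimensional kk W]
    (α : V →ₗ[kk] Module.Dual kk W) (g : V →ₗ[kk] kk)
    (hg : ∀ c, α c = 0 → g c = 0) : ∃ Λ : W, ∀ c, g c = α c Λ := by
  have hker : LinearMap.ker α ≤ LinearMap.ker g := fun c hc => hg c hc
  obtain ⟨h, hh⟩ := LinearMap.exists_extend
    (((LinearMap.ker α).liftQ g hker).comp
      (α.quotKerEquivRange.symm : LinearMap.range α →ₗ[kk] _))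
  obtain ⟨Λ, hΛ⟩ := (Module.evalEquiv kk W).surjective h
  refine ⟨Λ, fun c => ?_⟩
  have h2 : h (α c) = g c := by
    have := congrArg (fun f => f (⟨α c, LinearMap.mem_range_self α c⟩ : LinearMap.range α)) hh
    simp only [LinearMap.comp_apply, Submodule.subtype_apply, LinearEquiv.coe_coe] at this ⊢
    rw [this, α.quotKerEquivRange_symm_apply_image, Submodule.mkQ_apply, Submodule.liftQ_apply]
  rw [← h2, ← hΛ]
  simp [Module.Dual.eval]

variable (p : ℕ) [Fact p.Prime] (F : Type) [Field F] [Fintype F] [Algebra (ZMod p) F]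

lemma trace_mul_ne_zero {a : F} (ha : a ≠ 0) :
    ∃ b : F, Algebra.trace (ZMod p) F (b * a) ≠ 0 := by
  have : FiniteDimensional (ZMod p) F := Module.Finite.of_finite
  have h := (traceForm_nondegenerate (ZMod p) F).1 a
  by_contra hf
  push_neg at hf
  exact ha (h fun y => by simpa [Algebra.traceForm_apply, mul_comm] using hf y)

lemma dot_trace_eq_zero {n : ℕ} {x : Fin n → F}
    (h : ∀ y : Fin n → F, Algebra.trace (ZMod p) F (y ⬝ᵥ x) = 0) : x = 0 := by
  funext j
  by_contra hx
  obtain ⟨b, hb⟩ := trace_mul_ne_zero p F hx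
  have := h (Pi.single j b)
  rw [single_dotProduct] at this
  exact hb this

lemma mem_of_perp_trace {n : ℕ} (C : Submodule F (Fin n → F)) {u : Fin n → F}
    (hu : ∀ d : Fin n → F, (∀ y ∈ C, d ⬝ᵥ y = 0) → Algebra.trace (ZMod p) F (d ⬝ᵥ u) = 0) :
    u ∈ C := by
  by_contra hnot
  have hq : C.mkQ u ≠ 0 := by
    simpa [Submodule.Quotient.mk_eq_zero] using hnot
  obtain ⟨φ, hφ⟩ : ∃ φ : Module.Dual F ((Fin n → F) ⧸ C), φ (C.mkQ u) ≠ 0 := by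
    by_contra hf
    push_neg at hf
    exact hq ((Module.forall_dual_apply_eq_zero_iff F _).mp hf)
  set ψ := φ.comp C.mkQ with hψ
  set d : Fin n → F := fun j => ψ (Pi.single j 1) with hd
  have hdot : ∀ x : Fin n → F, d ⬝ᵥ x = ψ x := by
    intro x
    rw [LinearMap.pi_apply_eq_sum_univ ψ x, dotProduct]
    refine Finset.sum_congr rfl fun j _ => ?_
    have h1 : (fun j' => if j = j' then (1:F) else 0) = Pi.single j 1 := by
      funext j'; simp [Pi.single_apply, eq_comm]
    rw [smul_eq_mul, h1, mul_comm]
  have hψu : ψ u ≠ 0 := hφ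
  obtain ⟨b, hb⟩ := trace_mul_ne_zero p F hψu
  refine hb ?_
  have := hu (b • d) (fun y hy => by
    rw [smul_dotProduct, hdot, hψ, LinearMap.comp_apply]
    simp [(Submodule.Quotient.mk_eq_zero C).mpr hy])
  rwa [smul_dotProduct, hdot, smul_eq_mul] at this

/-- The `ZMod p`-linear map sending `z` to the functional `x ↦ Tr(z ⬝ᵥ x)`. -/
noncomputable def traceDot {n : ℕ} : (Fin n → F) →ₗ[ZMod p] Module.Dual (ZMod p) (Fin n → F) where
  toFun z :=
    { toFun := fun x => Algebra.trace (ZMod p) F (z ⬝ᵥ x)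
      map_add' := fun x y => by simp [dotProduct_add]
      map_smul' := fun a x => by simp [dotProduct_smul] }
  map_add' z w := by ext x; simp [add_dotProduct]
  map_smul' a z := by ext x; simp [smul_dotProduct]

lemma traceDot_surjective {n : ℕ} : Function.Surjective (traceDot p F (n := n)) := by
  have : FiniteDimensional (ZMod p) F := Module.Finite.of_finite
  have hinj : Function.Injective (traceDot p F (n := n)) := by
    rw [← LinearMap.ker_eq_bot, LinearMap.ker_eq_bot']
    intro z hz
    refine dot_trace_eq_zero p F (x := z) fun y => ?_
    have := congrFun (congrArg (fun f => (f : (Fin n → F) → ZMod p)) (congrArg DFunLike.coe hz)) y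
    simpa [traceDot, dotProduct_comm] using this
  rw [← LinearMap.injective_iff_surjective_of_finrank_eq_finrank
    (Subspace.dual_finrank_eq (K := ZMod p) (V := Fin n → F)).symm]
  exact hinj

lemma exists_dot_trace {n : ℕ} (C : Submodule F (Fin n → F)) (ψ : Module.Dual (ZMod p) ↥C) :
    ∃ z : Fin n → F, ∀ c : ↥C, Algebra.trace (ZMod p) F (z ⬝ᵥ (c : Fin n → F)) = ψ c := by
  have : FiniteDimensional (ZMod p) F := Module.Finite.of_finite
  obtain ⟨φ, hφ⟩ := LinearMap.dualMap_surjective_of_injective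
    (f := (C.subtype.restrictScalars (ZMod p))) (fun a b h => Subtype.ext h) ψ
  obtain ⟨z, hz⟩ := traceDot_surjective p F φ
  refine ⟨z, fun c => ?_⟩
  have h1 : traceDot p F z (c : Fin n → F) = φ (c : Fin n → F) := by rw [hz]
  have h2 : φ ((C.subtype.restrictScalars (ZMod p)) c) = ψ c := by rw [← hφ]; rfl
  exact h1.trans h2

end Helpers

section Counting
variable {m n : ℕ} {γ : Type} [Zero γ]

lemma card_filter_pair_eq (z : Fin m → Fin n → γ) :
    (Finset.univ.filter (fun ij : Fin m × Fin n => z ij.1 ij.2 ≠ 0)).card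
      = ∑ i, hammingNorm (z i) := by
  classical
  rw [Finset.card_filter, Fintype.sum_prod_type]
  refine Finset.sum_congr rfl fun i _ => ?_
  rw [hammingNorm, Finset.card_filter]

lemma hammingNorm_le_card_filter (u v : Fin m → Fin n → γ) (i : Fin m) :
    hammingNorm (u i) ≤ (Finset.univ.filter
      (fun ij : Fin m × Fin n => u ij.1 ij.2 ≠ 0 ∨ v ij.1 ij.2 ≠ 0)).card := by
  classical
  refine Finset.card_le_card_of_injOn (fun j => (i, j)) (fun j hj => ?_) ?_
  · simp only [Finset.coe_filter, Finset.mem_coe, Finset.mem_filter, Finset.mem_univ, true_and,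
      Set.mem_setOf_eq] at hj ⊢
    exact Or.inl hj
  · intro a _ b _ h
    exact congrArg Prod.snd h

lemma sum_hammingNorm_le_card_filter (u v : Fin m → Fin n → γ) :
    ∑ i, hammingNorm (v i) ≤ (Finset.univ.filter
      (fun ij : Fin m × Fin n => u ij.1 ij.2 ≠ 0 ∨ v ij.1 ij.2 ≠ 0)).card := by
  classical
  rw [← card_filter_pair_eq v]
  exact Finset.card_le_card (Finset.monotone_filter_right _ (fun ij _ hij => Or.inr hij))

lemma card_filter_single_eq (i0 : Fin m) (c0 : Fin n → γ) :
    (Finset.univ.filter (fun ij : Fin m × Fin n =>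
      (Pi.single i0 c0 : Fin m → Fin n → γ) ij.1 ij.2 ≠ 0
        ∨ (0 : Fin m → Fin n → γ) ij.1 ij.2 ≠ 0)).card
      = hammingNorm c0 := by
  classical
  rw [hammingNorm]
  refine Finset.card_bij' (fun ij _ => ij.2) (fun j _ => (i0, j)) ?_ ?_ ?_ ?_
  · intro ij hij
    simp only [Finset.mem_filter, Finset.mem_univ, true_and, Pi.zero_apply, ne_eq,
      not_true_eq_false, or_false, not_false_eq_true] at hij ⊢
    rcases eq_or_ne ij.1 i0 with h | h
    · rw [h, Pi.single_eq_same] at hij; simpa using hij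
    · rw [Pi.single_eq_of_ne h] at hij; simp at hij
  · intro j hj
    simp only [Finset.mem_filter, Finset.mem_univ, true_and, ne_eq] at hj ⊢
    left
    rwa [Pi.single_eq_same]
  · intro ij hij
    simp only [Finset.mem_filter, Finset.mem_univ, true_and, Pi.zero_apply, ne_eq,
      not_true_eq_false, or_false] at hij
    rcases eq_or_ne ij.1 i0 with h | h
    · exact Prod.ext h.symm rfl
    · rw [Pi.single_eq_of_ne h] at hij; simp at hij
  · intro j _; rfl
end Counting

section Alpha
variable (p : ℕ) [Fact p.Prime] (F K : Type) [Field F] [Fintype F] [Algebra (ZMod p) F]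
  [Field K] [Fintype K] [Algebra (ZMod p) K] {n m : ℕ}
  (C : Submodule F (Fin n → F)) (κ : K ≃ₗ[ZMod p] (↥C →ₗ[ZMod p] ZMod p))
  (D : Submodule K (Fin m → K))

/-- `α c = (Λ ↦ ∑ i, κ (Λ i) (c i))`. -/
noncomputable def alphaMap : (Fin m → ↥C) →ₗ[ZMod p] Module.Dual (ZMod p) ↥D where
  toFun c :=
    { toFun := fun Λ => ∑ i, κ ((Λ : Fin m → K) i) (c i)
      map_add' := fun Λ Λ' => by
        simp [Submodule.coe_add, Pi.add_apply, map_add, LinearMap.add_apply,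
          Finset.sum_add_distrib]
      map_smul' := fun a Λ => by
        simp [Submodule.coe_smul_of_tower, Pi.smul_apply, _root_.map_smul, LinearMap.smul_apply,
          Finset.smul_sum, Finset.mul_sum] }
  map_add' c c' := by
    ext Λ
    simp [Pi.add_apply, map_add, Finset.sum_add_distrib]
  map_smul' a c := by
    ext Λ
    simp [Pi.smul_apply, _root_.map_smul, Finset.smul_sum, Finset.mul_sum]

omit [Fintype F] [Fintype K] in
lemma alphaMap_apply (c : Fin m → ↥C) (Λ : ↥D) :
    alphaMap p F K C κ D c Λ = ∑ i, κ ((Λ : Fin m → K) i) (c i) := rfl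

end Alpha

/-- the minimum symplectic weight over `S̄^{⊥s} ∖ S̄` equals
`min{d(C), ℓ}` where `ℓ = min{wt(X) : X ∈ D^Θ ∖ (C^⊥)^m}`. -/
theorem stmt_10 (p r n k m s : ℕ) [Fact p.Prime] (hr : 0 < r) (hk1 : 1 ≤ k) (hkn : k < n)
    (hs1 : 1 ≤ s) (hsm : s < m)
    (F K : Type) [Field F] [Fintype F] [Algebra (ZMod p) F] (hF : Fintype.card F = p ^ r)
    [Field K] [Fintype K] [Algebra (ZMod p) K] (hK : Fintype.card K = (p ^ r) ^ k)
    (C : Submodule F (Fin n → F)) (hC : Module.finrank F C = k)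
    (κ : K ≃ₗ[ZMod p] (↥C →ₗ[ZMod p] ZMod p))
    (D : Submodule K (Fin m → K)) (hD : Module.finrank K ↥D = s)
    (hDcoord : ∀ i : Fin m, ∃ Λ ∈ D, Λ i = 1) :
    sInf {w : ℕ | ∃ uv : (Fin m → Fin n → F) × (Fin m → Fin n → F),
        (∀ cd : (Fin m → Fin n → F) × (Fin m → Fin n → F),
          ((∃ c : Fin m → ↥C, (∀ i, (c i : Fin n → F) = cd.1 i)
              ∧ ∀ Λ ∈ D, ∑ i : Fin m, κ (Λ i) (c i) = 0)
            ∧ (∀ i : Fin m, ∀ y ∈ C, cd.2 i ⬝ᵥ y = 0)) →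
          Algebra.trace (ZMod p) F
            ((∑ i : Fin m, cd.2 i ⬝ᵥ uv.1 i) - ∑ i : Fin m, uv.2 i ⬝ᵥ cd.1 i) = 0)
        ∧ ¬((∃ c : Fin m → ↥C, (∀ i, (c i : Fin n → F) = uv.1 i)
              ∧ ∀ Λ ∈ D, ∑ i : Fin m, κ (Λ i) (c i) = 0)
            ∧ (∀ i : Fin m, ∀ y ∈ C, uv.2 i ⬝ᵥ y = 0))
        ∧ w = (Finset.univ.filter
            (fun ij : Fin m × Fin n => uv.1 ij.1 ij.2 ≠ 0 ∨ uv.2 ij.1 ij.2 ≠ 0)).card}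
    = min
        (sInf {w : ℕ | ∃ c ∈ C, c ≠ 0 ∧ w = hammingNorm c})
        (sInf {w : ℕ | ∃ z : Fin m → Fin n → F,
            (∃ Λ ∈ D, ∀ (i : Fin m) (c : ↥C),
              Algebra.trace (ZMod p) F (z i ⬝ᵥ (c : Fin n → F)) = κ (Λ i) c)
            ∧ ¬(∀ i : Fin m, ∀ y ∈ C, z i ⬝ᵥ y = 0)
            ∧ w = ∑ i : Fin m, hammingNorm (z i)}) := by
  classical
  have hFD : FiniteDimensional (ZMod p) F := Module.Finite.of_finite
  set T := Algebra.trace (ZMod p) F with hT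
  -- index with m > 0
  have hm0 : 0 < m := by omega
  set i1 : Fin m := ⟨0, hm0⟩ with hi1
  obtain ⟨Λ', hΛ'D, hΛ'i1⟩ := hDcoord i1
  -- the three sets
  set Bset : Set ℕ := {w : ℕ | ∃ c ∈ C, c ≠ 0 ∧ w = hammingNorm c} with hBset
  set Lset : Set ℕ := {w : ℕ | ∃ z : Fin m → Fin n → F,
      (∃ Λ ∈ D, ∀ (i : Fin m) (c : ↥C),
        Algebra.trace (ZMod p) F (z i ⬝ᵥ (c : Fin n → F)) = κ (Λ i) c)
      ∧ ¬(∀ i : Fin m, ∀ y ∈ C, z i ⬝ᵥ y = 0)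
      ∧ w = ∑ i : Fin m, hammingNorm (z i)} with hLset
  -- B is nonempty
  have hBne : Bset.Nonempty := by
    have hCbot : C ≠ ⊥ := by
      intro h
      rw [h, finrank_bot] at hC
      omega
    obtain ⟨c, hc, hc0⟩ := Submodule.exists_mem_ne_zero_of_ne_bot hCbot
    exact ⟨hammingNorm c, c, hc, hc0, rfl⟩
  -- L is nonempty
  have hLne : Lset.Nonempty := by
    have hz : ∀ i : Fin m, ∃ z : Fin n → F,
        ∀ c : ↥C, T (z ⬝ᵥ (c : Fin n → F)) = κ (Λ' i) c :=
      fun i => exists_dot_trace p F C (κ (Λ' i))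
    choose z hzspec using hz
    refine ⟨∑ i, hammingNorm (z i), z, ⟨Λ', hΛ'D, hzspec⟩, ?_, rfl⟩
    intro hall
    have hκ1 : κ (Λ' i1) ≠ 0 := by
      rw [hΛ'i1]
      intro h
      have := κ.injective (h.trans (map_zero κ).symm)
      exact one_ne_zero this
    obtain ⟨c, hc⟩ : ∃ c : ↥C, κ (Λ' i1) c ≠ 0 := by
      by_contra hf
      push_neg at hf
      exact hκ1 (LinearMap.ext hf)
    have h0 : z i1 ⬝ᵥ (c : Fin n → F) = 0 := hall i1 (c : Fin n → F) c.2
    have := hzspec i1 c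
    rw [h0] at this
    simp only [map_zero] at this
    exact hc this.symm
  -- minimizers
  obtain ⟨c0, hc0C, hc0ne, hc0w⟩ := Nat.sInf_mem hBne
  obtain ⟨z0, ⟨Λ0, hΛ0D, hz0spec⟩, hz0not, hz0w⟩ := Nat.sInf_mem hLne
  -- element of A with weight sInf Bset
  have memA1 : sInf Bset ∈ {w : ℕ | ∃ uv : (Fin m → Fin n → F) × (Fin m → Fin n → F),
      (∀ cd : (Fin m → Fin n → F) × (Fin m → Fin n → F),
        ((∃ c : Fin m → ↥C, (∀ i, (c i : Fin n → F) = cd.1 i)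
            ∧ ∀ Λ ∈ D, ∑ i : Fin m, κ (Λ i) (c i) = 0)
          ∧ (∀ i : Fin m, ∀ y ∈ C, cd.2 i ⬝ᵥ y = 0)) →
        Algebra.trace (ZMod p) F
          ((∑ i : Fin m, cd.2 i ⬝ᵥ uv.1 i) - ∑ i : Fin m, uv.2 i ⬝ᵥ cd.1 i) = 0)
      ∧ ¬((∃ c : Fin m → ↥C, (∀ i, (c i : Fin n → F) = uv.1 i)
            ∧ ∀ Λ ∈ D, ∑ i : Fin m, κ (Λ i) (c i) = 0)
          ∧ (∀ i : Fin m, ∀ y ∈ C, uv.2 i ⬝ᵥ y = 0))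
      ∧ w = (Finset.univ.filter
          (fun ij : Fin m × Fin n => uv.1 ij.1 ij.2 ≠ 0 ∨ uv.2 ij.1 ij.2 ≠ 0)).card} := by
    refine ⟨((Pi.single i1 c0 : Fin m → Fin n → F), (0 : Fin m → Fin n → F)), ?_, ?_, ?_⟩
    · rintro cd ⟨⟨c', hc'coe, hc'E⟩, hd⟩
      have h1 : (∑ i : Fin m, cd.2 i ⬝ᵥ (Pi.single i1 c0 : Fin m → Fin n → F) i) = 0 := by
        rw [Finset.sum_eq_single i1]
        · rw [Pi.single_eq_same]
          exact hd i1 c0 hc0C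
        · intro i _ hne
          rw [Pi.single_eq_of_ne hne, dotProduct_zero]
        · intro h; exact absurd (Finset.mem_univ i1) h
      have h2 : (∑ i : Fin m, (0 : Fin m → Fin n → F) i ⬝ᵥ cd.1 i) = 0 := by
        refine Finset.sum_eq_zero fun i _ => ?_
        exact zero_dotProduct _
      rw [h1, h2, sub_zero]
      exact map_zero _
    · rintro ⟨⟨c', hc'coe, hc'E⟩, -⟩
      obtain ⟨φ, hφ⟩ : ∃ φ : Module.Dual (ZMod p) ↥C, φ ⟨c0, hc0C⟩ ≠ 0 := by
        by_contra hf
        push_neg at hf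
        have : (⟨c0, hc0C⟩ : ↥C) = 0 :=
          (Module.forall_dual_apply_eq_zero_iff (ZMod p) _).mp hf
        exact hc0ne (by simpa [Submodule.mk_eq_zero] using this)
      set lam : K := κ.symm φ with hlam
      have hmem : lam • Λ' ∈ D := D.smul_mem lam hΛ'D
      have := hc'E (lam • Λ') hmem
      rw [Finset.sum_eq_single i1] at this
      · have hci1 : c' i1 = ⟨c0, hc0C⟩ := by
          apply Subtype.ext
          rw [hc'coe i1]
          simp
        rw [hci1] at this
        have heval : κ ((lam • Λ') i1) = φ := by
          rw [Pi.smul_apply, hΛ'i1, smul_eq_mul, mul_one, hlam,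
            LinearEquiv.apply_symm_apply]
        rw [heval] at this
        exact hφ this
      · intro i _ hne
        have hci : c' i = 0 := by
          apply Subtype.ext
          rw [hc'coe i]
          simp [Pi.single_eq_of_ne hne]
        rw [hci, map_zero]
      · intro h; exact absurd (Finset.mem_univ i1) h
    · rw [hc0w, ← card_filter_single_eq i1 c0]
  -- element of A with weight sInf Lset
  have memA2 : sInf Lset ∈ {w : ℕ | ∃ uv : (Fin m → Fin n → F) × (Fin m → Fin n → F),
      (∀ cd : (Fin m → Fin n → F) × (Fin m → Fin n → F),
        ((∃ c : Fin m → ↥C, (∀ i, (c i : Fin n → F) = cd.1 i)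
            ∧ ∀ Λ ∈ D, ∑ i : Fin m, κ (Λ i) (c i) = 0)
          ∧ (∀ i : Fin m, ∀ y ∈ C, cd.2 i ⬝ᵥ y = 0)) →
        Algebra.trace (ZMod p) F
          ((∑ i : Fin m, cd.2 i ⬝ᵥ uv.1 i) - ∑ i : Fin m, uv.2 i ⬝ᵥ cd.1 i) = 0)
      ∧ ¬((∃ c : Fin m → ↥C, (∀ i, (c i : Fin n → F) = uv.1 i)
            ∧ ∀ Λ ∈ D, ∑ i : Fin m, κ (Λ i) (c i) = 0)
          ∧ (∀ i : Fin m, ∀ y ∈ C, uv.2 i ⬝ᵥ y = 0))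
      ∧ w = (Finset.univ.filter
          (fun ij : Fin m × Fin n => uv.1 ij.1 ij.2 ≠ 0 ∨ uv.2 ij.1 ij.2 ≠ 0)).card} := by
    refine ⟨((0 : Fin m → Fin n → F), z0), ?_, ?_, ?_⟩
    · rintro cd ⟨⟨c', hc'coe, hc'E⟩, hd⟩
      have h1 : (∑ i : Fin m, cd.2 i ⬝ᵥ (0 : Fin m → Fin n → F) i) = 0 :=
        Finset.sum_eq_zero fun i _ => dotProduct_zero _
      have h2 : T (∑ i : Fin m, z0 i ⬝ᵥ cd.1 i) = 0 := by
        rw [map_sum]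
        have : ∀ i : Fin m, T (z0 i ⬝ᵥ cd.1 i) = κ (Λ0 i) (c' i) := by
          intro i
          rw [← hc'coe i]
          exact hz0spec i (c' i)
        rw [Finset.sum_congr rfl fun i _ => this i]
        exact hc'E Λ0 hΛ0D
      rw [h1, zero_sub, map_neg, h2, neg_zero]
    · rintro ⟨-, h2⟩
      exact hz0not h2
    · rw [hz0w, ← card_filter_pair_eq z0]
      congr 1
      refine Finset.filter_congr fun ij _ => ?_
      simp
  -- lower bound
  have hlb : ∀ w ∈ {w : ℕ | ∃ uv : (Fin m → Fin n → F) × (Fin m → Fin n → F),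
      (∀ cd : (Fin m → Fin n → F) × (Fin m → Fin n → F),
        ((∃ c : Fin m → ↥C, (∀ i, (c i : Fin n → F) = cd.1 i)
            ∧ ∀ Λ ∈ D, ∑ i : Fin m, κ (Λ i) (c i) = 0)
          ∧ (∀ i : Fin m, ∀ y ∈ C, cd.2 i ⬝ᵥ y = 0)) →
        Algebra.trace (ZMod p) F
          ((∑ i : Fin m, cd.2 i ⬝ᵥ uv.1 i) - ∑ i : Fin m, uv.2 i ⬝ᵥ cd.1 i) = 0)
      ∧ ¬((∃ c : Fin m → ↥C, (∀ i, (c i : Fin n → F) = uv.1 i)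
            ∧ ∀ Λ ∈ D, ∑ i : Fin m, κ (Λ i) (c i) = 0)
          ∧ (∀ i : Fin m, ∀ y ∈ C, uv.2 i ⬝ᵥ y = 0))
      ∧ w = (Finset.univ.filter
          (fun ij : Fin m × Fin n => uv.1 ij.1 ij.2 ≠ 0 ∨ uv.2 ij.1 ij.2 ≠ 0)).card},
      min (sInf Bset) (sInf Lset) ≤ w := by
    rintro w ⟨uv, hperp, hnotS, hwcard⟩
    -- each uv.1 i lies in C
    have hu : ∀ i : Fin m, uv.1 i ∈ C := by
      intro i
      refine mem_of_perp_trace p F C fun d hd => ?_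
      have := hperp ((0 : Fin m → Fin n → F), (Pi.single i d : Fin m → Fin n → F))
        ⟨⟨0, fun j => rfl, fun Λ _ => Finset.sum_eq_zero fun j _ => by
            simp⟩,
          fun i' y hy => by
            show (Pi.single i d : Fin m → Fin n → F) i' ⬝ᵥ y = 0
            rcases eq_or_ne i' i with h | h
            · rw [h, Pi.single_eq_same]; exact hd y hy
            · rw [Pi.single_eq_of_ne h, zero_dotProduct]⟩
      have this2 : T ((∑ j : Fin m, (Pi.single i d : Fin m → Fin n → F) j ⬝ᵥ uv.1 j)
          - ∑ j : Fin m, uv.2 j ⬝ᵥ (0 : Fin m → Fin n → F) j) = 0 := this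
      rw [Finset.sum_eq_single i] at this2
      · have h2 : (∑ j : Fin m, uv.2 j ⬝ᵥ (0 : Fin m → Fin n → F) j) = 0 :=
          Finset.sum_eq_zero fun j _ => dotProduct_zero _
        rwa [Pi.single_eq_same, h2, sub_zero] at this2
      · intro j _ hne
        rw [Pi.single_eq_of_ne hne, zero_dotProduct]
      · intro h; exact absurd (Finset.mem_univ i) h
    -- uv.2 realizes some Λ ∈ D
    have hv : ∃ Λ : ↥D, ∀ (i : Fin m) (c : ↥C),
        T (uv.2 i ⬝ᵥ (c : Fin n → F)) = κ ((Λ : Fin m → K) i) c := by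
      set g : (Fin m → ↥C) →ₗ[ZMod p] ZMod p :=
        { toFun := fun c => T (∑ i : Fin m, uv.2 i ⬝ᵥ ((c i : Fin n → F)))
          map_add' := fun c c' => by
            have h : (∑ i : Fin m, uv.2 i ⬝ᵥ (((c + c') i : ↥C) : Fin n → F))
                = (∑ i : Fin m, uv.2 i ⬝ᵥ ((c i : ↥C) : Fin n → F))
                  + ∑ i : Fin m, uv.2 i ⬝ᵥ ((c' i : ↥C) : Fin n → F) := by
              rw [← Finset.sum_add_distrib]
              refine Finset.sum_congr rfl fun i _ => ?_
              rw [← dotProduct_add]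
              rfl
            show T _ = T _ + T _
            rw [h, map_add]
          map_smul' := fun a c => by
            have h : (∑ i : Fin m, uv.2 i ⬝ᵥ (((a • c) i : ↥C) : Fin n → F))
                = a • ∑ i : Fin m, uv.2 i ⬝ᵥ ((c i : ↥C) : Fin n → F) := by
              rw [Finset.smul_sum]
              refine Finset.sum_congr rfl fun i _ => ?_
              rw [← dotProduct_smul]
              exact congrArg (fun x => uv.2 i ⬝ᵥ x) (Submodule.coe_smul_of_tower a (c i))
            show T _ = _
            rw [h, _root_.map_smul]
            rfl } with hg
      have hFDD : FiniteDimensional (ZMod p) ↥D := Module.Finite.of_finite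
      have hgann : ∀ c : Fin m → ↥C, alphaMap p F K C κ D c = 0 → g c = 0 := by
        intro c hc
        have hE : ∀ Λ ∈ D, ∑ i : Fin m, κ (Λ i) (c i) = 0 := by
          intro Λ hΛD
          have := congrArg (fun f => f (⟨Λ, hΛD⟩ : ↥D)) hc
          simpa [alphaMap_apply] using this
        have hpz := hperp ((fun i => (c i : Fin n → F)), (0 : Fin m → Fin n → F))
          ⟨⟨c, fun i => rfl, hE⟩, fun i y _ => zero_dotProduct _⟩
        have h1 : (∑ i : Fin m, (0 : Fin m → Fin n → F) i ⬝ᵥ uv.1 i) = 0 :=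
          Finset.sum_eq_zero fun i _ => zero_dotProduct _
        have hpz2 : T ((∑ i : Fin m, (0 : Fin m → Fin n → F) i ⬝ᵥ uv.1 i)
            - ∑ i : Fin m, uv.2 i ⬝ᵥ ((c i : ↥C) : Fin n → F)) = 0 := hpz
        rw [h1, zero_sub, map_neg, neg_eq_zero] at hpz2
        exact hpz2
      obtain ⟨Λ, hΛ⟩ := factor_through_dual (alphaMap p F K C κ D) g hgann
      refine ⟨Λ, fun i c => ?_⟩
      have h0 := hΛ (Pi.single i c)
      rw [alphaMap_apply] at h0
      have hgs : g (Pi.single i c) = T (uv.2 i ⬝ᵥ (c : Fin n → F)) := by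
        show T _ = _
        congr 1
        rw [Finset.sum_eq_single i]
        · rw [Pi.single_eq_same]
        · intro j _ hne
          rw [Pi.single_eq_of_ne hne]
          simp
        · intro h; exact absurd (Finset.mem_univ i) h
      have hrhs : (∑ j : Fin m, κ ((Λ : Fin m → K) j) ((Pi.single i c : Fin m → ↥C) j))
          = κ ((Λ : Fin m → K) i) c := by
        rw [Finset.sum_eq_single i]
        · rw [Pi.single_eq_same]
        · intro j _ hne
          rw [Pi.single_eq_of_ne hne, map_zero]
        · intro h; exact absurd (Finset.mem_univ i) h
      rw [hgs, hrhs] at h0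
      exact h0
    by_cases h2 : ∀ i : Fin m, ∀ y ∈ C, uv.2 i ⬝ᵥ y = 0
    · -- v ∈ (C^⊥)^m, so u ∉ E
      have hc'coe : ∀ i, ((⟨uv.1 i, hu i⟩ : ↥C) : Fin n → F) = uv.1 i := fun i => rfl
      have hnotE : ¬(∀ Λ ∈ D, ∑ i : Fin m, κ (Λ i) (⟨uv.1 i, hu i⟩ : ↥C) = 0) := by
        intro hE
        exact hnotS ⟨⟨fun i => ⟨uv.1 i, hu i⟩, hc'coe, hE⟩, h2⟩
      push_neg at hnotE
      obtain ⟨Λ2, hΛ2D, hΛ2⟩ := hnotE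
      obtain ⟨i, hi⟩ : ∃ i : Fin m, κ (Λ2 i) (⟨uv.1 i, hu i⟩ : ↥C) ≠ 0 := by
        by_contra hf
        push_neg at hf
        exact hΛ2 (Finset.sum_eq_zero fun i _ => hf i)
      have hui : uv.1 i ≠ 0 := by
        intro h
        apply hi
        have : (⟨uv.1 i, hu i⟩ : ↥C) = 0 := Subtype.ext (show uv.1 i = _ from h.trans rfl)
        rw [this, map_zero]
      have hB : sInf Bset ≤ hammingNorm (uv.1 i) :=
        Nat.sInf_le ⟨uv.1 i, hu i, hui, rfl⟩
      refine le_trans (min_le_left _ _) (le_trans hB ?_)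
      rw [hwcard]
      exact hammingNorm_le_card_filter uv.1 uv.2 i
    · -- v ∉ (C^⊥)^m
      obtain ⟨Λ, hΛspec⟩ := hv
      have hL : sInf Lset ≤ ∑ i, hammingNorm (uv.2 i) :=
        Nat.sInf_le ⟨uv.2, ⟨(Λ : Fin m → K), Λ.2, hΛspec⟩, h2, rfl⟩
      refine le_trans (min_le_right _ _) (le_trans hL ?_)
      rw [hwcard]
      exact sum_hammingNorm_le_card_filter uv.1 uv.2
  refine le_antisymm (le_min (Nat.sInf_le memA1) (Nat.sInf_le memA2)) (le_csInf ⟨_, memA1⟩ hlb)
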